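/- For any measurable classifier h : X → [0,1], L₀(h) + L₁(h) ≥ max_{s∈{0,1}} E_{X∼P_s}[|y₁(X) − y₀(X)|] − D_TV(P₀, P₁). -/

import Mathlib

open MeasureTheory

/-- Group risk under ℓ₁ loss. -/
noncomputable def risk {X : Type*} [MeasurableSpace X]
    (P : Measure X) (y h : X → ℝ) : ℝ := ∫ x, |h x - y x| ∂P

/-- Total variation distance `sup_E |P₀(E) − P₁(E)|` over measurable sets. -/
noncomputable def tvDist {X : Type*} [MeasurableSpace X] (P Q : Measure X) : ℝ :=
  sSup {d | ∃ E : Set X, MeasurableSet E ∧ d = |(P E).toReal - (Q E).toReal|}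

lemma tvDist_bddAbove {X : Type*} [MeasurableSpace X] (P Q : Measure X)
    [IsProbabilityMeasure P] [IsProbabilityMeasure Q] :
    BddAbove {d | ∃ E : Set X, MeasurableSet E ∧ d = |(P E).toReal - (Q E).toReal|} := by
  refine ⟨1, fun d hd => ?_⟩
  obtain ⟨E, _, rfl⟩ := hd
  have h1 : (P E).toReal ≤ 1 := by
    have := prob_le_one (μ := P) (s := E)
    simpa using ENNReal.toReal_mono ENNReal.one_ne_top this
  have h2 : (Q E).toReal ≤ 1 := by
    have := prob_le_one (μ := Q) (s := E)
    simpa using ENNReal.toReal_mono ENNReal.one_ne_top this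
  have h3 : (0:ℝ) ≤ (P E).toReal := ENNReal.toReal_nonneg
  have h4 : (0:ℝ) ≤ (Q E).toReal := ENNReal.toReal_nonneg
  rw [abs_le]; constructor <;> linarith

lemma abs_measure_diff_le_tvDist {X : Type*} [MeasurableSpace X] (P Q : Measure X)
    [IsProbabilityMeasure P] [IsProbabilityMeasure Q] {E : Set X} (hE : MeasurableSet E) :
    |(P E).toReal - (Q E).toReal| ≤ tvDist P Q :=
  le_csSup (tvDist_bddAbove P Q) ⟨E, hE, rfl⟩

lemma tvDist_comm {X : Type*} [MeasurableSpace X] (P Q : Measure X) :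
    tvDist P Q = tvDist Q P := by
  unfold tvDist
  congr 1
  ext d
  constructor <;> rintro ⟨E, hE, rfl⟩ <;> exact ⟨E, hE, (abs_sub_comm _ _)⟩

lemma integrable_of_bounded01 {X : Type*} [MeasurableSpace X] (P : Measure X)
    [IsProbabilityMeasure P] {f : X → ℝ} (hf : Measurable f)
    (hf01 : ∀ x, f x ∈ Set.Icc (0:ℝ) 1) : Integrable f P := by
  refine (integrable_const (1:ℝ)).mono' hf.aestronglyMeasurable ?_
  filter_upwards with x
  rw [Real.norm_eq_abs, abs_of_nonneg (hf01 x).1]; exact (hf01 x).2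

/-- Key lemma: for `f : X → [0,1]` measurable, `∫ f dP - ∫ f dQ ≤ tvDist P Q`. -/
lemma integral_sub_le_tvDist {X : Type*} [MeasurableSpace X] (P Q : Measure X)
    [IsProbabilityMeasure P] [IsProbabilityMeasure Q] {f : X → ℝ} (hf : Measurable f)
    (hf01 : ∀ x, f x ∈ Set.Icc (0:ℝ) 1) :
    ∫ x, f x ∂P - ∫ x, f x ∂Q ≤ tvDist P Q := by
  have hIP : Integrable f P := integrable_of_bounded01 P hf hf01
  have hIQ : Integrable f Q := integrable_of_bounded01 Q hf hf01
  have hP := hIP.integral_eq_integral_Ioc_meas_le (M := 1)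
    (Filter.Eventually.of_forall fun x => (hf01 x).1)
    (Filter.Eventually.of_forall fun x => (hf01 x).2)
  have hQ := hIQ.integral_eq_integral_Ioc_meas_le (M := 1)
    (Filter.Eventually.of_forall fun x => (hf01 x).1)
    (Filter.Eventually.of_forall fun x => (hf01 x).2)
  rw [hP, hQ]
  have measP : Measurable fun t : ℝ => ((P {a | t ≤ f a}).toReal) := by
    refine Measurable.ennreal_toReal ?_
    exact Antitone.measurable (fun s t hst => measure_mono fun a ha => hst.trans ha)
  have measQ : Measurable fun t : ℝ => ((Q {a | t ≤ f a}).toReal) := by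
    refine Measurable.ennreal_toReal ?_
    exact Antitone.measurable (fun s t hst => measure_mono fun a ha => hst.trans ha)
  have hintP : IntegrableOn (fun t : ℝ => (P {a | t ≤ f a}).toReal) (Set.Ioc 0 1) := by
    refine Integrable.mono' (g := fun _ => (1:ℝ))
      (integrableOn_const (by simp [Real.volume_Ioc]))
      measP.aestronglyMeasurable ?_
    · filter_upwards with t
      rw [Real.norm_eq_abs, abs_of_nonneg ENNReal.toReal_nonneg]
      have := prob_le_one (μ := P) (s := {a | t ≤ f a})
      simpa using ENNReal.toReal_mono ENNReal.one_ne_top this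
  have hintQ : IntegrableOn (fun t : ℝ => (Q {a | t ≤ f a}).toReal) (Set.Ioc 0 1) := by
    refine Integrable.mono' (g := fun _ => (1:ℝ))
      (integrableOn_const (by simp [Real.volume_Ioc]))
      measQ.aestronglyMeasurable ?_
    · filter_upwards with t
      rw [Real.norm_eq_abs, abs_of_nonneg ENNReal.toReal_nonneg]
      have := prob_le_one (μ := Q) (s := {a | t ≤ f a})
      simpa using ENNReal.toReal_mono ENNReal.one_ne_top this
  simp only [Measure.real]
  rw [← integral_sub hintP hintQ]
  have : ∫ t in Set.Ioc (0:ℝ) 1, ((P {a | t ≤ f a}).toReal - (Q {a | t ≤ f a}).toReal)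
      ≤ ∫ _t in Set.Ioc (0:ℝ) 1, tvDist P Q := by
    refine setIntegral_mono_on (hintP.sub hintQ) (integrableOn_const ?_)
      measurableSet_Ioc (fun t _ => ?_)
    · simp [Real.volume_Ioc]
    · calc (P {a | t ≤ f a}).toReal - (Q {a | t ≤ f a}).toReal
          ≤ |(P {a | t ≤ f a}).toReal - (Q {a | t ≤ f a}).toReal| := le_abs_self _
        _ ≤ tvDist P Q := abs_measure_diff_le_tvDist P Q
            (measurableSet_le measurable_const hf)
  refine this.trans ?_
  rw [setIntegral_const]
  simp [Real.volume_Ioc]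

theorem risk_sum_lower_bound {X : Type*} [MeasurableSpace X]
    (P₀ P₁ : Measure X) [IsProbabilityMeasure P₀] [IsProbabilityMeasure P₁]
    (y₀ y₁ : X → ℝ) (hy₀ : Measurable y₀) (hy₁ : Measurable y₁)
    (hy₀01 : ∀ x, y₀ x ∈ Set.Icc (0:ℝ) 1) (hy₁01 : ∀ x, y₁ x ∈ Set.Icc (0:ℝ) 1)
    (h : X → ℝ) (hh : Measurable h) (hh01 : ∀ x, h x ∈ Set.Icc (0:ℝ) 1) :
    risk P₀ y₀ h + risk P₁ y₁ h ≥
      max (∫ x, |y₁ x - y₀ x| ∂P₀) (∫ x, |y₁ x - y₀ x| ∂P₁) - tvDist P₀ P₁ := by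
  have habs : ∀ (a b : X → ℝ), (∀ x, a x ∈ Set.Icc (0:ℝ) 1) → (∀ x, b x ∈ Set.Icc (0:ℝ) 1) →
      ∀ x, |a x - b x| ∈ Set.Icc (0:ℝ) 1 := by
    intro a b ha hb x
    have h1 := ha x; have h2 := hb x
    simp only [Set.mem_Icc] at *
    constructor
    · exact abs_nonneg _
    · rw [abs_le]; constructor <;> linarith [h1.1, h1.2, h2.1, h2.2]
  have hmeas : ∀ (a b : X → ℝ), Measurable a → Measurable b →
      Measurable fun x => |a x - b x| := fun a b ha hb => (ha.sub hb).abs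
  -- integrability facts
  have I : ∀ (P : Measure X) [IsProbabilityMeasure P] (a b : X → ℝ), Measurable a →
      Measurable b → (∀ x, a x ∈ Set.Icc (0:ℝ) 1) → (∀ x, b x ∈ Set.Icc (0:ℝ) 1) →
      Integrable (fun x => |a x - b x|) P := by
    intro P _ a b ha hb ha01 hb01
    exact integrable_of_bounded01 P (hmeas a b ha hb) (habs a b ha01 hb01)
  -- pointwise triangle inequality
  have tri : ∀ x, |y₁ x - y₀ x| ≤ |h x - y₀ x| + |h x - y₁ x| := by
    intro x
    calc |y₁ x - y₀ x| = |(h x - y₀ x) - (h x - y₁ x)| := by ring_nf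
      _ ≤ |h x - y₀ x| + |h x - y₁ x| := abs_sub _ _
  rw [ge_iff_le, sub_le_iff_le_add, max_le_iff]
  constructor
  · -- case P₀
    have step1 : ∫ x, |y₁ x - y₀ x| ∂P₀ ≤ ∫ x, (|h x - y₀ x| + |h x - y₁ x|) ∂P₀ := by
      refine integral_mono (I P₀ y₁ y₀ hy₁ hy₀ hy₁01 hy₀01)
        ((I P₀ h y₀ hh hy₀ hh01 hy₀01).add (I P₀ h y₁ hh hy₁ hh01 hy₁01)) tri
    rw [integral_add (I P₀ h y₀ hh hy₀ hh01 hy₀01) (I P₀ h y₁ hh hy₁ hh01 hy₁01)] at step1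
    have step2 : ∫ x, |h x - y₁ x| ∂P₀ ≤ ∫ x, |h x - y₁ x| ∂P₁ + tvDist P₀ P₁ := by
      have := integral_sub_le_tvDist P₀ P₁ (hmeas h y₁ hh hy₁) (habs h y₁ hh01 hy₁01)
      linarith
    unfold risk
    linarith
  · -- case P₁
    have step1 : ∫ x, |y₁ x - y₀ x| ∂P₁ ≤ ∫ x, (|h x - y₀ x| + |h x - y₁ x|) ∂P₁ := by
      refine integral_mono (I P₁ y₁ y₀ hy₁ hy₀ hy₁01 hy₀01)
        ((I P₁ h y₀ hh hy₀ hh01 hy₀01).add (I P₁ h y₁ hh hy₁ hh01 hy₁01)) tri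
    rw [integral_add (I P₁ h y₀ hh hy₀ hh01 hy₀01) (I P₁ h y₁ hh hy₁ hh01 hy₁01)] at step1
    have step2 : ∫ x, |h x - y₀ x| ∂P₁ ≤ ∫ x, |h x - y₀ x| ∂P₀ + tvDist P₀ P₁ := by
      have := integral_sub_le_tvDist P₁ P₀ (hmeas h y₀ hh hy₀) (habs h y₀ hh01 hy₀01)
      rw [tvDist_comm P₁ P₀] at this
      linarith
    unfold risk
    linarith
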